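/- arXiv:1105.4221 — 2 statements merged into one kernel-verified Lean document; each statement's English description precedes it below -/
import Mathlib

section
/- Let V : ℝ → ℝ be integrable, let ħ > 0 and E ≠ 0, and let f₊(·,E;ħ) and f₋(·,E;ħ) be the Jost solutions of −ħ² f'' + V f = E² f. Then the Wronskian satisfies |W(f₋(·,E;ħ), f₊(·,E;ħ))| ≥ 2|E|/ħ; in particular {f₋(·,E;ħ), f₊(·,E;ħ)} is a fundamental system. -/
open Set Filter Topology MeasureTheory

/-- The "self-Wronskian" `f·conj f' − f'·conj f` of a solution of `f'' = c f`
with real (self-conjugate) coefficient `c` is constant. -/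
lemma jost_self_wronskian_const {f : ℝ → ℂ} {c : ℝ → ℂ}
    (hf : ContDiff ℝ 2 f)
    (hode : ∀ x, deriv (deriv f) x = c x * f x)
    (hc : ∀ x, star (c x) = c x) :
    ∀ x y : ℝ, f x * star (deriv f x) - deriv f x * star (f x)
      = f y * star (deriv f y) - deriv f y * star (f y) := by
  have hdf : Differentiable ℝ (deriv f) := by
    have h2 : ContDiff ℝ ((1:WithTop ℕ∞)+1) f := by norm_num; exact hf
    exact ((contDiff_succ_iff_deriv.mp h2).2.2).differentiable (by norm_num)
  have hfd : Differentiable ℝ f := hf.differentiable (by norm_num)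
  have key : ∀ x : ℝ, HasDerivAt
      (fun x => f x * star (deriv f x) - deriv f x * star (f x)) 0 x := by
    intro x
    have h1 : HasDerivAt f (deriv f x) x := (hfd x).hasDerivAt
    have h2 : HasDerivAt (deriv f) (deriv (deriv f) x) x := (hdf x).hasDerivAt
    have H := (h1.mul h2.star).sub (h2.mul h1.star)
    refine H.congr_deriv ?_
    rw [hode x, star_mul', hc x]
    ring
  exact fun x y => is_const_of_deriv_eq_zero
    (fun z => ((key z).differentiableAt)) (fun z => (key z).deriv) x y

/-- For `V ∈ L¹(ℝ)` real-valued, `ħ > 0`, `E ≠ 0`, and Jost solutions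
`f₊, f₋` of `−ħ² f'' + V f = E² f` (characterized by their asymptotics at `±∞`),
the Wronskian `W(f₋, f₊) = f₋ f₊' − f₋' f₊` satisfies `|W| ≥ 2|E|/ħ`; in particular
it is nonvanishing, i.e. `{f₋, f₊}` is a fundamental system. -/
theorem jost_wronskian_lower_bound
    (V : ℝ → ℝ) (hV : Integrable V)
    (hb E : ℝ) (hhb : 0 < hb) (hE : E ≠ 0)
    (fp fm : ℝ → ℂ)
    (hfp_smooth : ContDiff ℝ 2 fp) (hfm_smooth : ContDiff ℝ 2 fm)
    (hfp_ode : ∀ x : ℝ,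
      -(hb:ℂ)^2 * deriv (deriv fp) x + (V x : ℂ) * fp x = (E:ℂ)^2 * fp x)
    (hfm_ode : ∀ x : ℝ,
      -(hb:ℂ)^2 * deriv (deriv fm) x + (V x : ℂ) * fm x = (E:ℂ)^2 * fm x)
    (hfp_lim : Tendsto (fun x : ℝ => fp x * Complex.exp (-(Complex.I * E * x / hb)))
      atTop (𝓝 1))
    (hfp_lim' : Tendsto (fun x : ℝ => deriv fp x * Complex.exp (-(Complex.I * E * x / hb)))
      atTop (𝓝 (Complex.I * E / hb)))
    (hfm_lim : Tendsto (fun x : ℝ => fm x * Complex.exp (Complex.I * E * x / hb))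
      atBot (𝓝 1))
    (hfm_lim' : Tendsto (fun x : ℝ => deriv fm x * Complex.exp (Complex.I * E * x / hb))
      atBot (𝓝 (-(Complex.I * E / hb)))) :
    ∀ x : ℝ,
      2 * |E| / hb ≤ ‖fm x * deriv fp x - deriv fm x * fp x‖ ∧
      fm x * deriv fp x - deriv fm x * fp x ≠ 0 := by
  have hbC : (hb:ℂ) ≠ 0 := Complex.ofReal_ne_zero.mpr hhb.ne'
  set c : ℝ → ℂ := fun x => ((V x : ℂ) - (E:ℂ)^2) / (hb:ℂ)^2 with hc_def
  have hcstar : ∀ x, star (c x) = c x := by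
    intro x
    simp [hc_def, ← Complex.ofReal_pow, Complex.star_def, map_div₀, map_sub,
      Complex.conj_ofReal]
  have hodep : ∀ x, deriv (deriv fp) x = c x * fp x := by
    intro x
    have h := hfp_ode x
    simp only [hc_def]
    field_simp
    linear_combination -h
  have hodem : ∀ x, deriv (deriv fm) x = c x * fm x := by
    intro x
    have h := hfm_ode x
    simp only [hc_def]
    field_simp
    linear_combination -h
  -- constancy of self-Wronskians
  have hWm := jost_self_wronskian_const hfm_smooth hodem hcstar
  have hWp := jost_self_wronskian_const hfp_smooth hodep hcstar
  -- e(x) * star e(x) = 1 for exponentials with purely imaginary argument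
  have hconjarg : ∀ x : ℝ, (starRingEnd ℂ) (Complex.I * E * x / hb)
      = -(Complex.I * E * x / hb) := by
    intro x
    simp [map_div₀, map_mul, Complex.conj_I, Complex.conj_ofReal]
    ring
  have hee : ∀ x : ℝ, Complex.exp (Complex.I * E * x / hb)
      * star (Complex.exp (Complex.I * E * x / hb)) = 1 := by
    intro x
    rw [Complex.star_def, ← Complex.exp_conj, hconjarg, ← Complex.exp_add]
    simp
  have hee' : ∀ x : ℝ, Complex.exp (-(Complex.I * E * x / hb))
      * star (Complex.exp (-(Complex.I * E * x / hb))) = 1 := by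
    intro x
    rw [Complex.star_def, ← Complex.exp_conj, map_neg, hconjarg, ← Complex.exp_add]
    simp
  -- value of Wmm via the limit at -∞
  have hWmval : ∀ x : ℝ, fm x * star (deriv fm x) - deriv fm x * star (fm x)
      = 2 * Complex.I * E / hb := by
    have hcong : ∀ x : ℝ,
        (fm x * Complex.exp (Complex.I * E * x / hb))
          * star (deriv fm x * Complex.exp (Complex.I * E * x / hb))
        - (deriv fm x * Complex.exp (Complex.I * E * x / hb))
          * star (fm x * Complex.exp (Complex.I * E * x / hb))
        = fm x * star (deriv fm x) - deriv fm x * star (fm x) := by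
      intro x
      simp only [star_mul']
      linear_combination (fm x * star (deriv fm x) - deriv fm x * star (fm x)) * hee x
    have hT : Tendsto (fun x : ℝ => fm x * star (deriv fm x) - deriv fm x * star (fm x))
        atBot (𝓝 ((1:ℂ) * star (-(Complex.I * E / hb)) - (-(Complex.I * E / hb)) * star 1)) := by
      have := (hfm_lim.mul hfm_lim'.star).sub (hfm_lim'.mul hfm_lim.star)
      exact (tendsto_congr hcong).mp this
    have hlimval : (1:ℂ) * star (-(Complex.I * E / hb)) - (-(Complex.I * E / hb)) * star 1
        = 2 * Complex.I * E / hb := by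
      simp [Complex.star_def, map_div₀, map_mul, Complex.conj_I, Complex.conj_ofReal]
      ring
    rw [hlimval] at hT
    intro x
    rw [hWm x 0]
    have hT0 : Tendsto (fun _ : ℝ => fm 0 * star (deriv fm 0) - deriv fm 0 * star (fm 0))
        atBot (𝓝 (2 * Complex.I * E / hb)) := by
      refine (tendsto_congr fun z => ?_).mpr hT
      exact (hWm z 0).symm
    exact tendsto_nhds_unique tendsto_const_nhds hT0
  -- value of Wpp via the limit at +∞
  have hWpval : ∀ x : ℝ, fp x * star (deriv fp x) - deriv fp x * star (fp x)
      = -(2 * Complex.I * E / hb) := by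
    have hcong : ∀ x : ℝ,
        (fp x * Complex.exp (-(Complex.I * E * x / hb)))
          * star (deriv fp x * Complex.exp (-(Complex.I * E * x / hb)))
        - (deriv fp x * Complex.exp (-(Complex.I * E * x / hb)))
          * star (fp x * Complex.exp (-(Complex.I * E * x / hb)))
        = fp x * star (deriv fp x) - deriv fp x * star (fp x) := by
      intro x
      simp only [star_mul']
      linear_combination (fp x * star (deriv fp x) - deriv fp x * star (fp x)) * hee' x
    have hT : Tendsto (fun x : ℝ => fp x * star (deriv fp x) - deriv fp x * star (fp x))
        atTop (𝓝 ((1:ℂ) * star (Complex.I * E / hb) - (Complex.I * E / hb) * star 1)) := by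
      have := (hfp_lim.mul hfp_lim'.star).sub (hfp_lim'.mul hfp_lim.star)
      exact (tendsto_congr hcong).mp this
    have hlimval : (1:ℂ) * star (Complex.I * E / hb) - (Complex.I * E / hb) * star 1
        = -(2 * Complex.I * E / hb) := by
      simp [Complex.star_def, map_div₀, map_mul, Complex.conj_I, Complex.conj_ofReal]
      ring
    rw [hlimval] at hT
    intro x
    rw [hWp x 0]
    have hT0 : Tendsto (fun _ : ℝ => fp 0 * star (deriv fp 0) - deriv fp 0 * star (fp 0))
        atTop (𝓝 (-(2 * Complex.I * E / hb))) := by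
      refine (tendsto_congr fun z => ?_).mpr hT
      exact (hWp z 0).symm
    exact tendsto_nhds_unique tendsto_const_nhds hT0
  -- main pointwise argument
  intro x
  set m := fm x; set m' := deriv fm x; set p := fp x; set p' := deriv fp x
  set W : ℂ := m * p' - m' * p with hWdef
  set A : ℂ := m * star p' - m' * star p with hAdef
  -- Plücker identity
  have hpluck : W * star W
      = (m * star m' - m' * star m) * (p * star p' - p' * star p) + A * star A := by
    simp only [hWdef, hAdef, star_sub, star_mul', star_star]
    ring
  have hI2 : (Complex.I)^2 = -1 := Complex.I_sq
  have hprod : (2 * Complex.I * (E:ℂ) / hb) * -(2 * Complex.I * E / hb)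
      = ((4 * E^2 / hb^2 : ℝ) : ℂ) := by
    push_cast
    linear_combination (-4*(E:ℂ)^2/(hb:ℂ)^2) * hI2
  have hkey : W * star W = ((4 * E^2 / hb^2 : ℝ) : ℂ) + A * star A := by
    rw [hpluck, hWmval x, hWpval x, hprod]
  have hnormsq : Complex.normSq W = 4 * E^2 / hb^2 + Complex.normSq A := by
    have h1 : (Complex.normSq W : ℂ) = ((4 * E^2 / hb^2 : ℝ) : ℂ) + (Complex.normSq A : ℂ) := by
      rw [← Complex.mul_conj, ← Complex.mul_conj]
      exact hkey
    exact_mod_cast h1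
  have hns : ‖W‖^2 = 4 * E^2 / hb^2 + ‖A‖^2 := by
    simp only [Complex.sq_norm]
    exact hnormsq
  have hEpos : 0 < |E| := abs_pos.mpr hE
  have ht2 : (2 * |E| / hb)^2 = 4 * E^2 / hb^2 := by
    rw [div_pow, mul_pow, sq_abs]; ring
  have h1 : (2 * |E| / hb)^2 ≤ ‖W‖^2 := by
    rw [hns, ht2]; nlinarith [sq_nonneg ‖A‖]
  have hle : 2 * |E| / hb ≤ ‖W‖ := by
    calc 2 * |E| / hb = Real.sqrt ((2 * |E| / hb)^2) := (Real.sqrt_sq (by positivity)).symm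
      _ ≤ Real.sqrt (‖W‖^2) := Real.sqrt_le_sqrt h1
      _ = ‖W‖ := Real.sqrt_sq (norm_nonneg W)
  refine ⟨hle, fun h0 => ?_⟩
  rw [h0] at hle
  simp at hle
  have : (0:ℝ) < 2 * |E| / hb := by positivity
  linarith
end

section
/- Let 0 < ħ ≪ 1 and 0 < E ≤ ν₀ħ/2 for a fixed ν₀ > 0, set ν := 2E/ħ and α := √(ħ²/4+4E²). Then the semiclassical Jost solution of −ħ² f'' + V(·;ħ) f = E² f satisfies, for all x > x₀, f₊(x,E;ħ) = 2^{−1/2+iν} ħ^{1/2−iν} e^{x/4} (∂_zφ((2/α)e^{−x/2}, α²;ħ))^{−1/2} ǧ₋(φ((2/α)e^{−x/2}, α²;ħ), E;ħ), where ǧ₋(·,E;ħ) is the solution of the normal form equation with ǧ₋(w,E;ħ) = B₋(αw/ħ,ν)[1+ħ²č₋(w,E;ħ)] near w = 0 (so that ǧ₋(w,E;ħ)/(ħ^{−1/2+iν}(αw)^{1/2−iν}) → 1 as w → 0+). -/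
open Set Filter Topology

lemma ofReal_exp_cpow (r : ℝ) (s : ℂ) :
    ((Real.exp r : ℝ) : ℂ) ^ s = Complex.exp (r * s) := by
  rw [Complex.ofReal_exp, Complex.cpow_def_of_ne_zero (Complex.exp_ne_zero _),
    Complex.log_exp (by rw [Complex.ofReal_im]; linarith [Real.pi_pos])
      (by rw [Complex.ofReal_im]; linarith [Real.pi_pos])]

lemma hasDerivAt_conj' {f : ℝ → ℂ} {f' : ℂ} {x : ℝ} (hf : HasDerivAt f f' x) :
    HasDerivAt (fun y => (starRingEnd ℂ) (f y)) ((starRingEnd ℂ) f') x := by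
  exact (Complex.conjCLE.hasFDerivAt.comp_hasDerivAt x hf :)

lemma deriv_conj' {f : ℝ → ℂ} {x : ℝ} (hf : DifferentiableAt ℝ f x) :
    deriv (fun y => (starRingEnd ℂ) (f y)) x = (starRingEnd ℂ) (deriv f x) :=
  (hasDerivAt_conj' hf.hasDerivAt).deriv

lemma ofReal_mul_cpow {a b : ℝ} (ha : 0 ≤ a) (hb : 0 ≤ b) (r : ℂ) :
    ((a * b : ℝ) : ℂ) ^ r = ((a : ℝ) : ℂ) ^ r * ((b : ℝ) : ℂ) ^ r := by
  rw [Complex.ofReal_mul]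
  exact Complex.mul_cpow_ofReal_nonneg ha hb r

lemma const_of_hasDerivAt_zero_Ioi {x₀ : ℝ} {W : ℝ → ℂ}
    (h : ∀ t ∈ Ioi x₀, HasDerivAt W 0 t) {x y : ℝ} (hx : x ∈ Ioi x₀) (hy : y ∈ Ioi x₀) :
    W x = W y := by
  wlog hxy : x ≤ y generalizing x y
  · exact (this hy hx (le_of_not_ge hxy)).symm
  have hsub : Icc x y ⊆ Ioi x₀ := fun t ht => lt_of_lt_of_le hx ht.1
  have := constant_of_has_deriv_right_zero (f := W) (a := x) (b := y)
    (fun t ht => (h t (hsub ht)).continuousAt.continuousWithinAt)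
    (fun t ht => ((h t (hsub (Ico_subset_Icc_self ht))).hasDerivWithinAt))
  exact (this y (right_mem_Icc.mpr hxy)).symm


/-- `α(ħ,E) = √(ħ²/4 + 4E²)`. -/
noncomputable def alf (hb E : ℝ) : ℝ := Real.sqrt (hb^2/4 + 4*E^2)

/-- Corollary: representation of the Jost solution for small
`ν = 2E/ħ ≤ ν₀`: with `V(x;ħ) = e^{−x}(1+ε(e^{−x};ħ))` for `x > x₀`,
`φ` the Liouville–Green diffeomorphism onto `(0,w₀)` and `ǧ₋` the solution of the
normal form equation of the form `B₋(αw/ħ,ν)(1+ħ²č₋)` near `w = 0`, the outgoing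
Jost solution satisfies, for all `x > x₀`,
`f₊(x,E;ħ) = 2^{−1/2+iν} ħ^{1/2−iν} e^{x/4} (∂_zφ((2/α)e^{−x/2}))^{−1/2}
  ǧ₋(φ((2/α)e^{−x/2}))`. -/
theorem jost_solution_small_nu_representation
    (x₀ hb₀ ν₀ : ℝ) (hx₀ : x₀ < 0) (hhb₀ : 0 < hb₀) (hν₀ : 0 < ν₀)
    (ε : ℝ → ℝ → ℝ)
    (hε_smooth : ∀ hb ∈ Ioo (0:ℝ) hb₀, ContDiff ℝ (⊤ : ℕ∞) (fun s => ε s hb))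
    (hε0 : ∀ hb ∈ Ioo (0:ℝ) hb₀, ε 0 hb = 0)
    (hεgt : ∀ hb ∈ Ioo (0:ℝ) hb₀, ∀ s ∈ Icc (0:ℝ) (Real.exp (-x₀)), -1 < ε s hb)
    (hεbd : ∃ D : ℕ → ℝ, ∀ k : ℕ, ∀ hb ∈ Ioo (0:ℝ) hb₀,
      ∀ s ∈ Icc (0:ℝ) (Real.exp (-x₀)),
        |iteratedDeriv k (fun s' => ε s' hb) s| ≤ D k)
    -- fixed semiclassical parameters with 0 < ν = 2E/ħ ≤ ν₀
    (E hb : ℝ) (hhb : hb ∈ Ioo (0:ℝ) hb₀) (hE : E ∈ Ioc (0:ℝ) (ν₀*hb/2))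
    -- the Liouville–Green diffeomorphism φ of (0, α⁻¹y₀) onto (0, w₀)
    (φ : ℝ → ℝ) (w₀ : ℝ)
    (hφ_smooth : ContDiffOn ℝ (⊤ : ℕ∞) φ
      (Ioo 0 ((2*Real.exp (-x₀/2)) / alf hb E)))
    (hφ_bij : BijOn φ (Ioo 0 ((2*Real.exp (-x₀/2)) / alf hb E)) (Ioo 0 w₀))
    (hφ_LG : ∀ z ∈ Ioo (0:ℝ) ((2*Real.exp (-x₀/2)) / alf hb E),
      1 - 1/z^2 + ε ((hb^2/4 + 4*E^2)*z^2) hb = (deriv φ z)^2 * (1 - 1/(φ z)^2))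
    (hφ_pos : ∀ z ∈ Ioo (0:ℝ) ((2*Real.exp (-x₀/2)) / alf hb E), 0 < deriv φ z)
    (hφ0 : Tendsto (fun z => φ z / z) (𝓝[>] 0) (𝓝 1))
    (hφ0' : Tendsto (fun z => deriv φ z) (𝓝[>] 0) (𝓝 1))
    -- the normal form equation: −(ħ/α)²g'' + (1−1/w²)g = ħ²V₁ g, obtained from the
    -- original equation through the Liouville–Green transform induced by φ
    (V₁ : ℝ → ℝ)
    (hEquiv : ∀ f g : ℝ → ℂ,
      ContDiffOn ℝ 2 f (Ioi x₀) → ContDiffOn ℝ 2 g (Ioo 0 w₀) →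
      (∀ x ∈ Ioi x₀,
        g (φ ((2/alf hb E)*Real.exp (-x/2)))
          = ((Real.exp (-x/4) *
              Real.sqrt (deriv φ ((2/alf hb E)*Real.exp (-x/2))) : ℝ) : ℂ) * f x) →
      ((∀ w ∈ Ioo (0:ℝ) w₀,
          -((hb/alf hb E : ℝ) : ℂ)^2 * deriv (deriv g) w
              + ((1 - 1/w^2 : ℝ) : ℂ) * g w = ((hb^2 * V₁ w : ℝ) : ℂ) * g w) ↔
        (∀ x ∈ Ioi x₀,
          -(hb:ℂ)^2 * deriv (deriv f) x +
            ((Real.exp (-x) * (1 + ε (Real.exp (-x)) hb) : ℝ) - (E:ℂ)^2) * f x = 0)))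
    -- ǧ₋ : the solution of the normal form equation of the oscillatory form near 0
    (gm : ℝ → ℂ)
    (hg_smooth : ContDiffOn ℝ 2 gm (Ioo 0 w₀))
    (hg_ode : ∀ w ∈ Ioo (0:ℝ) w₀,
      -((hb/alf hb E : ℝ) : ℂ)^2 * deriv (deriv gm) w
          + ((1 - 1/w^2 : ℝ) : ℂ) * gm w = ((hb^2 * V₁ w : ℝ) : ℂ) * gm w)
    (hg_form : ∃ (w₁ M : ℝ) (bm cm : ℝ → ℂ), 0 < w₁ ∧ w₁ ≤ w₀ ∧ 0 < M ∧
      (∀ w ∈ Ioo (0:ℝ) w₁,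
        gm w = ((alf hb E * w / hb : ℝ) : ℂ) ^ ((1:ℂ)/2 - Complex.I * (2*E/hb : ℝ))
          * (1 + bm (alf hb E * w / hb)) * (1 + (hb:ℂ)^2 * cm w)) ∧
      (∀ v ∈ Ioo (0:ℝ) (alf hb E * w₁ / hb),
        ‖bm v‖ ≤ M * v^2 ∧ ‖deriv bm v‖ ≤ M * v) ∧
      (∀ w ∈ Ioo (0:ℝ) w₁, ‖cm w‖ ≤ M ∧ ‖deriv cm w‖ ≤ M / w))
    (hg_asym : Tendsto (fun w : ℝ =>
        gm w / ((hb:ℂ) ^ (-(1:ℂ)/2 + Complex.I * (2*E/hb : ℝ)) *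
          ((alf hb E * w : ℝ) : ℂ) ^ ((1:ℂ)/2 - Complex.I * (2*E/hb : ℝ))))
      (𝓝[>] 0) (𝓝 1))
    -- f : the outgoing Jost solution of −ħ²f'' + Vf = E²f on (x₀,∞)
    (f : ℝ → ℂ)
    (hf_smooth : ContDiffOn ℝ 2 f (Ioi x₀))
    (hf_ode : ∀ x ∈ Ioi x₀,
      -(hb:ℂ)^2 * deriv (deriv f) x +
        ((Real.exp (-x) * (1 + ε (Real.exp (-x)) hb) : ℝ) - (E:ℂ)^2) * f x = 0)
    (hf_lim : Tendsto (fun x : ℝ => f x * Complex.exp (-(Complex.I * E * x / hb)))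
      atTop (𝓝 1))
    (hf_lim' : Tendsto (fun x : ℝ => deriv f x * Complex.exp (-(Complex.I * E * x / hb)))
      atTop (𝓝 (Complex.I * E / hb))) :
    ∀ x ∈ Ioi x₀,
      f x = (2:ℂ) ^ (-(1:ℂ)/2 + Complex.I * (2*E/hb : ℝ))
        * (hb:ℂ) ^ ((1:ℂ)/2 - Complex.I * (2*E/hb : ℝ))
        * ((Real.exp (x/4) *
            (Real.sqrt (deriv φ ((2/alf hb E)*Real.exp (-x/2))))⁻¹ : ℝ) : ℂ)
        * gm (φ ((2/alf hb E)*Real.exp (-x/2))) := by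
  obtain ⟨hb_pos, -⟩ := hhb
  obtain ⟨hE_pos, -⟩ := hE
  have hbne : hb ≠ 0 := ne_of_gt hb_pos
  have hEne : E ≠ 0 := ne_of_gt hE_pos
  have hα_pos : 0 < alf hb E := Real.sqrt_pos.mpr (by positivity)
  set α := alf hb E with hα
  set ν : ℂ := ((2*E/hb : ℝ) : ℂ) with hν
  set s : ℂ := (1:ℂ)/2 - Complex.I * ν with hs
  set e₁ : ℂ := -(1:ℂ)/2 + Complex.I * ν with he₁
  set z : ℝ → ℝ := fun x => 2/α * Real.exp (-x/2) with hz
  have hz_pos : ∀ x : ℝ, 0 < z x :=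
    fun x => mul_pos (div_pos two_pos hα_pos) (Real.exp_pos _)
  have hz_mem : ∀ x ∈ Ioi x₀, z x ∈ Ioo 0 (2*Real.exp (-x₀/2)/α) := by
    intro x hx
    refine ⟨hz_pos x, ?_⟩
    have hlt : Real.exp (-x/2) < Real.exp (-x₀/2) :=
      Real.exp_lt_exp.mpr (by simp only [mem_Ioi] at hx; linarith)
    calc z x = 2*Real.exp (-x/2)/α := by rw [hz]; ring
      _ < 2*Real.exp (-x₀/2)/α :=
          (div_lt_div_iff_of_pos_right hα_pos).mpr (by linarith)
  have hw_mem : ∀ x ∈ Ioi x₀, φ (z x) ∈ Ioo 0 w₀ := fun x hx => hφ_bij.mapsTo (hz_mem x hx)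
  have hd_pos : ∀ x ∈ Ioi x₀, 0 < deriv φ (z x) := fun x hx => hφ_pos _ (hz_mem x hx)
  set F : ℝ → ℂ := fun x =>
    ((Real.exp (x/4) * (Real.sqrt (deriv φ (z x)))⁻¹ : ℝ) : ℂ) * gm (φ (z x)) with hF
  -- smoothness of F
  have hz_cd : ContDiff ℝ 2 z := by
    rw [hz]
    exact contDiff_const.mul ((Real.contDiff_exp.of_le le_top).comp
      ((contDiff_id.neg).div_const 2))
  have hdφ_cd : ContDiffOn ℝ 2 (deriv φ) (Ioo 0 (2*Real.exp (-x₀/2)/α)) := by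
    exact hφ_smooth.deriv_of_isOpen isOpen_Ioo (by exact WithTop.coe_le_coe.mpr le_top)
  have hF_cd : ContDiffOn ℝ 2 F (Ioi x₀) := by
    intro x hx
    apply ContDiffAt.contDiffWithinAt
    have h1 : ContDiffAt ℝ 2 z x := hz_cd.contDiffAt
    have h2 : ContDiffAt ℝ 2 (fun y => deriv φ (z y)) x :=
      (hdφ_cd.contDiffAt (isOpen_Ioo.mem_nhds (hz_mem x hx))).comp x h1
    have h3 : ContDiffAt ℝ 2 (fun y => Real.sqrt (deriv φ (z y))) x :=
      (Real.contDiffAt_sqrt (ne_of_gt (hd_pos x hx))).comp x h2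
    have h4 : ContDiffAt ℝ 2 (fun y => (Real.sqrt (deriv φ (z y)))⁻¹) x :=
      h3.inv (ne_of_gt (Real.sqrt_pos.mpr (hd_pos x hx)))
    have h5 : ContDiffAt ℝ 2 (fun y : ℝ => Real.exp (y/4)) x :=
      (Real.contDiff_exp.of_le le_top).contDiffAt.comp x (contDiff_id.div_const 4).contDiffAt
    have h6 : ContDiffAt ℝ 2
        (fun y => Real.exp (y/4) * (Real.sqrt (deriv φ (z y)))⁻¹) x := h5.mul h4
    have h7 : ContDiffAt ℝ 2
        (fun y : ℝ => ((Real.exp (y/4) * (Real.sqrt (deriv φ (z y)))⁻¹ : ℝ) : ℂ)) x :=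
      Complex.ofRealCLM.contDiff.contDiffAt.comp x h6
    have h8 : ContDiffAt ℝ 2 (fun y => gm (φ (z y))) x :=
      ((hg_smooth.contDiffAt (isOpen_Ioo.mem_nhds (hw_mem x hx))).comp x
        ((hφ_smooth.contDiffAt (isOpen_Ioo.mem_nhds (hz_mem x hx))).of_le (by exact WithTop.coe_le_coe.mpr le_top) |>.comp x h1))
    exact h7.mul h8
  -- the intertwining relation
  have hrel : ∀ x ∈ Ioi x₀,
      gm (φ (2/α*Real.exp (-x/2)))
        = ((Real.exp (-x/4) * Real.sqrt (deriv φ (2/α*Real.exp (-x/2))) : ℝ) : ℂ) * F x := by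
    intro x hx
    have hzx : z x = 2/α*Real.exp (-x/2) := by rw [hz]
    rw [hF, ← hzx]
    have hsq : Real.sqrt (deriv φ (z x)) ≠ 0 := ne_of_gt (Real.sqrt_pos.mpr (hd_pos x hx))
    have hkey : (Real.exp (-x/4) * Real.sqrt (deriv φ (z x))) *
        (Real.exp (x/4) * (Real.sqrt (deriv φ (z x)))⁻¹) = 1 := by
      rw [mul_mul_mul_comm, ← Real.exp_add]
      field_simp
      norm_num
    rw [← mul_assoc, ← Complex.ofReal_mul, hkey, Complex.ofReal_one, one_mul]
  -- F solves the original equation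
  have hF_ode : ∀ x ∈ Ioi x₀,
      -(hb:ℂ)^2 * deriv (deriv F) x +
        ((Real.exp (-x) * (1 + ε (Real.exp (-x)) hb) : ℝ) - (E:ℂ)^2) * F x = 0 :=
    (hEquiv F gm hF_cd hg_smooth hrel).mp hg_ode
  -- differentiability extraction
  have hdiff_of_cd : ∀ u : ℝ → ℂ, ContDiffOn ℝ 2 u (Ioi x₀) → ∀ x ∈ Ioi x₀,
      DifferentiableAt ℝ u x ∧ DifferentiableAt ℝ (deriv u) x := by
    intro u hu x hx
    have hx' : Ioi x₀ ∈ 𝓝 x := isOpen_Ioi.mem_nhds hx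
    constructor
    · exact (hu.differentiableOn (by norm_num)).differentiableAt hx'
    · have h1 : ContDiffOn ℝ 1 (deriv u) (Ioi x₀) :=
        hu.deriv_of_isOpen isOpen_Ioi (by norm_num)
      exact (h1.differentiableOn (by norm_num)).differentiableAt hx'
  -- the conjugate solution
  set fc : ℝ → ℂ := fun x => (starRingEnd ℂ) (f x) with hfc
  have hf_d := hdiff_of_cd f hf_smooth
  have hF_d := hdiff_of_cd F hF_cd
  have hfc_deriv : ∀ x ∈ Ioi x₀, deriv fc x = (starRingEnd ℂ) (deriv f x) :=
    fun x hx => deriv_conj' (hf_d x hx).1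
  have hfc_d : ∀ x ∈ Ioi x₀, DifferentiableAt ℝ fc x ∧ DifferentiableAt ℝ (deriv fc) x := by
    intro x hx
    have hmem : Ioi x₀ ∈ 𝓝 x := isOpen_Ioi.mem_nhds hx
    have hev : deriv fc =ᶠ[𝓝 x] fun y => (starRingEnd ℂ) (deriv f y) := by
      filter_upwards [hmem] with y hy using hfc_deriv y hy
    refine ⟨(hasDerivAt_conj' (hf_d x hx).1.hasDerivAt).differentiableAt, ?_⟩
    exact ((hasDerivAt_conj' (hf_d x hx).2.hasDerivAt).differentiableAt).congr_of_eventuallyEq hev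
  have hfc_dd : ∀ x ∈ Ioi x₀, deriv (deriv fc) x = (starRingEnd ℂ) (deriv (deriv f) x) := by
    intro x hx
    have hev : deriv fc =ᶠ[𝓝 x] fun y => (starRingEnd ℂ) (deriv f y) := by
      filter_upwards [isOpen_Ioi.mem_nhds hx] with y hy using hfc_deriv y hy
    rw [hev.deriv_eq]
    exact deriv_conj' (hf_d x hx).2
  have hfc_ode : ∀ x ∈ Ioi x₀,
      -(hb:ℂ)^2 * deriv (deriv fc) x +
        ((Real.exp (-x) * (1 + ε (Real.exp (-x)) hb) : ℝ) - (E:ℂ)^2) * fc x = 0 := by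
    intro x hx
    have h2 := congrArg (starRingEnd ℂ) (hf_ode x hx)
    simp only [map_add, map_mul, map_neg, map_pow, map_sub, map_zero,
      Complex.conj_ofReal] at h2
    rw [hfc_dd x hx]
    exact h2
  -- Wronskian constancy
  have hW_const : ∀ u v : ℝ → ℂ,
      (∀ t ∈ Ioi x₀, DifferentiableAt ℝ u t ∧ DifferentiableAt ℝ (deriv u) t) →
      (∀ t ∈ Ioi x₀, DifferentiableAt ℝ v t ∧ DifferentiableAt ℝ (deriv v) t) →
      (∀ t ∈ Ioi x₀, -(hb:ℂ)^2 * deriv (deriv u) t +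
          ((Real.exp (-t) * (1 + ε (Real.exp (-t)) hb) : ℝ) - (E:ℂ)^2) * u t = 0) →
      (∀ t ∈ Ioi x₀, -(hb:ℂ)^2 * deriv (deriv v) t +
          ((Real.exp (-t) * (1 + ε (Real.exp (-t)) hb) : ℝ) - (E:ℂ)^2) * v t = 0) →
      ∀ x ∈ Ioi x₀, ∀ y ∈ Ioi x₀,
        u x * deriv v x - deriv u x * v x = u y * deriv v y - deriv u y * v y := by
    intro u v hu hv huo hvo x hx y hy
    refine const_of_hasDerivAt_zero_Ioi (W := fun t => u t * deriv v t - deriv u t * v t) ?_ hx hy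
    intro t ht
    have Hu := (hu t ht).1.hasDerivAt
    have Hu' := (hu t ht).2.hasDerivAt
    have Hv := (hv t ht).1.hasDerivAt
    have Hv' := (hv t ht).2.hasDerivAt
    have H := (Hu.mul Hv').sub (Hu'.mul Hv)
    have hb2 : ((hb:ℂ))^2 ≠ 0 := pow_ne_zero _ (Complex.ofReal_ne_zero.mpr hbne)
    have hval : deriv u t * deriv v t + u t * deriv (deriv v) t -
        (deriv (deriv u) t * v t + deriv u t * deriv v t) = 0 := by
      have e1 := huo t ht
      have e2 := hvo t ht
      have hval2 : ((hb:ℂ))^2 * (deriv u t * deriv v t + u t * deriv (deriv v) t -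
          (deriv (deriv u) t * v t + deriv u t * deriv v t)) = 0 := by
        linear_combination (v t) * e1 - (u t) * e2
      exact (mul_eq_zero.mp hval2).resolve_left hb2
    rw [hval] at H
    exact H
  -- basic limits
  have hzt0 : Tendsto z atTop (𝓝 0) := by
    have h1 : Tendsto (fun x : ℝ => -x/2) atTop atBot := by
      have h2 : Tendsto (fun x : ℝ => x/2) atTop atTop := tendsto_id.atTop_div_const two_pos
      exact (tendsto_neg_atTop_atBot.comp h2).congr (fun x => by simp only [Function.comp_apply]; ring)
    have h3 : Tendsto (fun x : ℝ => Real.exp (-x/2)) atTop (𝓝 0) :=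
      Real.tendsto_exp_atBot.comp h1
    have h4 := h3.const_mul (2/α)
    rw [mul_zero] at h4
    exact h4.congr (fun x => by rw [hz])
  have ht1 : Tendsto z atTop (𝓝[>] 0) := by
    rw [tendsto_nhdsWithin_iff]
    exact ⟨hzt0, Eventually.of_forall (fun x => hz_pos x)⟩
  have ht2 : Tendsto (fun x => deriv φ (z x)) atTop (𝓝 1) := hφ0'.comp ht1
  have ht3 : Tendsto (fun x => φ (z x) / z x) atTop (𝓝 1) := hφ0.comp ht1
  have ht4 : Tendsto (fun x => φ (z x)) atTop (𝓝[>] 0) := by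
    rw [tendsto_nhdsWithin_iff]
    constructor
    · have h5 := ht3.mul hzt0
      rw [mul_zero] at h5
      exact h5.congr (fun x => div_mul_cancel₀ _ (ne_of_gt (hz_pos x)))
    · filter_upwards [eventually_gt_atTop x₀] with x hx using (hw_mem x hx).1
  have ht5 : Tendsto (fun x => (((Real.sqrt (deriv φ (z x)))⁻¹ : ℝ) : ℂ)) atTop (𝓝 1) := by
    have h6 : Tendsto (fun x => Real.sqrt (deriv φ (z x))) atTop (𝓝 1) := by
      have := (Real.continuous_sqrt.tendsto 1).comp ht2
      rwa [Real.sqrt_one] at this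
    have h7 := h6.inv₀ one_ne_zero
    rw [inv_one] at h7
    have h8 := (Complex.continuous_ofReal.tendsto 1).comp h7
    rwa [Complex.ofReal_one] at h8
  have ht6 : Tendsto (fun x => (((φ (z x) / z x : ℝ)) : ℂ)^s) atTop (𝓝 1) := by
    have h9 := (Complex.continuous_ofReal.tendsto 1).comp ht3
    rw [Complex.ofReal_one] at h9
    have h10 : ContinuousAt (fun y : ℂ => y ^ s) 1 :=
      continuousAt_cpow_const Complex.one_mem_slitPlane
    have h11 := h10.tendsto.comp h9
    simp only [Function.comp_def] at h11
    rwa [Complex.one_cpow] at h11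
  have ht7 : Tendsto (fun x => gm (φ (z x)) /
      ((hb:ℂ)^e₁ * ((α * φ (z x) : ℝ) : ℂ)^s)) atTop (𝓝 1) := hg_asym.comp ht4
  -- nonvanishing of the constants
  have h2s_ne : (2:ℂ)^s ≠ 0 := by
    rw [Complex.cpow_def_of_ne_zero two_ne_zero]; exact Complex.exp_ne_zero _
  have hbe_ne : (hb:ℂ)^e₁ ≠ 0 := by
    rw [Complex.cpow_def_of_ne_zero (Complex.ofReal_ne_zero.mpr hbne)]
    exact Complex.exp_ne_zero _
  -- pointwise formula for the transformed solution
  have hGpt : ∀ x ∈ Ioi x₀, F x * Complex.exp (-(Complex.I * E * x / hb)) =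
      (2:ℂ)^s * (hb:ℂ)^e₁ * (((Real.sqrt (deriv φ (z x)))⁻¹ : ℝ) : ℂ) *
      (((φ (z x) / z x : ℝ)) : ℂ)^s *
      (gm (φ (z x)) / ((hb:ℂ)^e₁ * ((α * φ (z x) : ℝ) : ℂ)^s)) := by
    intro x hx
    have hw : φ (z x) ∈ Ioo 0 w₀ := hw_mem x hx
    have hαw_pos : 0 < α * φ (z x) := mul_pos hα_pos hw.1
    have hD_ne : (hb:ℂ)^e₁ * ((α * φ (z x) : ℝ) : ℂ)^s ≠ 0 := by
      refine mul_ne_zero hbe_ne ?_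
      rw [Complex.cpow_def_of_ne_zero (Complex.ofReal_ne_zero.mpr (ne_of_gt hαw_pos))]
      exact Complex.exp_ne_zero _
    have hzx : z x = 2/α * Real.exp (-x/2) := by rw [hz]
    have hfac : α * φ (z x) = (2 * Real.exp (-x/2)) * (φ (z x) / z x) := by
      rw [hzx]
      have hφT : φ (2/α * Real.exp (-x/2)) = φ (2/α * Real.exp (-x/2)) := rfl
      field_simp
    have hsplit : ((α * φ (z x) : ℝ) : ℂ)^s
        = (2:ℂ)^s * Complex.exp ((-x/2 : ℝ) * s) * (((φ (z x) / z x : ℝ)) : ℂ)^s := by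
      rw [hfac, ofReal_mul_cpow (by positivity) (le_of_lt (div_pos hw.1 (hz_pos x))),
        ofReal_mul_cpow (by norm_num) (le_of_lt (Real.exp_pos _)),
        ofReal_exp_cpow, Complex.ofReal_ofNat]
    have hexp1 : ((Real.exp (x/4) : ℝ) : ℂ) * Complex.exp ((-x/2 : ℝ) * s) *
        Complex.exp (-(Complex.I * E * x / hb)) = 1 := by
      rw [Complex.ofReal_exp, ← Complex.exp_add, ← Complex.exp_add]
      rw [show ((x/4 : ℝ) : ℂ) + ((-x/2 : ℝ) : ℂ) * s + -(Complex.I * E * x / hb) = 0 from ?_]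
      · exact Complex.exp_zero
      · rw [hs, hν]; push_cast; ring
    simp only [hF]
    rw [← mul_div_assoc, eq_div_iff hD_ne, hsplit, Complex.ofReal_mul]
    linear_combination ((2:ℂ)^s * (hb:ℂ)^e₁ * (((Real.sqrt (deriv φ (z x)))⁻¹ : ℝ) : ℂ) *
        (((φ (z x) / z x : ℝ)) : ℂ)^s * gm (φ (z x))) * hexp1
  -- the limit of the transformed solution
  have hG : Tendsto (fun x => F x * Complex.exp (-(Complex.I * E * x / hb))) atTop
      (𝓝 ((2:ℂ)^s * (hb:ℂ)^e₁)) := by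
    have hlim := (((tendsto_const_nhds (x := (2:ℂ)^s * (hb:ℂ)^e₁)
      (f := (atTop : Filter ℝ))).mul ht5).mul ht6).mul ht7
    rw [mul_one, mul_one, mul_one] at hlim
    apply hlim.congr'
    filter_upwards [eventually_gt_atTop x₀] with x hx
    exact (hGpt x hx).symm
  -- conjugation kills the phase
  have hEcc : ∀ x : ℝ, (starRingEnd ℂ) (Complex.exp (-(Complex.I * E * x / hb))) *
      Complex.exp (-(Complex.I * E * x / hb)) = 1 := by
    intro x
    rw [← Complex.exp_conj, ← Complex.exp_add]
    rw [show (starRingEnd ℂ) (-(Complex.I * (E:ℂ) * (x:ℝ) / hb)) +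
        -(Complex.I * (E:ℂ) * (x:ℝ) / hb) = 0 from ?_]
    · exact Complex.exp_zero
    · simp only [map_neg, map_div₀, map_mul, Complex.conj_I, Complex.conj_ofReal]
      ring
  -- the Wronskian of f and its conjugate
  set c₁ : ℂ := (-2 : ℂ) * Complex.I * E / hb with hcinf
  clear_value c₁
  have hWffc_lim : Tendsto (fun x => f x * deriv fc x - deriv f x * fc x) atTop (𝓝 c₁) := by
    have hconj_lim' : Tendsto (fun x => (starRingEnd ℂ)
        (deriv f x * Complex.exp (-(Complex.I * E * x / hb)))) atTop
        (𝓝 ((starRingEnd ℂ) (Complex.I * E / hb))) :=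
      (Complex.continuous_conj.tendsto _).comp hf_lim'
    have hconj_lim : Tendsto (fun x => (starRingEnd ℂ)
        (f x * Complex.exp (-(Complex.I * E * x / hb)))) atTop (𝓝 1) := by
      have := (Complex.continuous_conj.tendsto 1).comp hf_lim
      rwa [map_one] at this
    have hmain := (hf_lim.mul hconj_lim').sub (hf_lim'.mul hconj_lim)
    have hval : (1 : ℂ) * (starRingEnd ℂ) (Complex.I * E / hb) -
        Complex.I * E / hb * 1 = c₁ := by
      rw [hcinf]
      simp only [map_div₀, map_mul, Complex.conj_I, Complex.conj_ofReal, one_mul, mul_one]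
      ring
    rw [hval] at hmain
    apply hmain.congr'
    filter_upwards [eventually_gt_atTop x₀] with x hx
    rw [hfc_deriv x hx]
    simp only [hfc, map_mul]
    linear_combination (f x * (starRingEnd ℂ) (deriv f x) -
      deriv f x * (starRingEnd ℂ) (f x)) * hEcc x
  have hWffc_eq : ∀ x ∈ Ioi x₀, f x * deriv fc x - deriv f x * fc x = c₁ := by
    intro x hx
    have hconst := hW_const f fc hf_d hfc_d hf_ode hfc_ode
    have hevent : Tendsto (fun y => f y * deriv fc y - deriv f y * fc y) atTop
        (𝓝 (f x * deriv fc x - deriv f x * fc x)) := by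
      apply tendsto_const_nhds.congr'
      filter_upwards [eventually_gt_atTop x₀] with y hy
      exact hconst x hx y hy
    exact tendsto_nhds_unique hevent hWffc_lim
  have hcinf_ne : c₁ ≠ 0 := by
    rw [hcinf]
    apply div_ne_zero _ (Complex.ofReal_ne_zero.mpr hbne)
    exact mul_ne_zero (mul_ne_zero (by norm_num) Complex.I_ne_zero)
      (Complex.ofReal_ne_zero.mpr hEne)
  -- decompose F in the basis (f, conj f)
  have hx₁ : x₀ + 1 ∈ Ioi x₀ := mem_Ioi.mpr (lt_add_one x₀)
  set A : ℂ := (F (x₀+1) * deriv fc (x₀+1) - deriv F (x₀+1) * fc (x₀+1)) / c₁ with hA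
  set B : ℂ := (f (x₀+1) * deriv F (x₀+1) - deriv f (x₀+1) * F (x₀+1)) / c₁ with hB
  clear_value A B
  have hFAB : ∀ x ∈ Ioi x₀, F x = A * f x + B * fc x := by
    intro x hx
    have h1 := hWffc_eq x hx
    have h2 := hW_const F fc hF_d hfc_d hF_ode hfc_ode x hx (x₀+1) hx₁
    have h3 := hW_const f F hf_d hF_d hf_ode hF_ode x hx (x₀+1) hx₁
    rw [hA, hB, ← h2, ← h3, div_mul_eq_mul_div, div_mul_eq_mul_div, ← add_div,
      eq_div_iff hcinf_ne]
    linear_combination (-(F x)) * h1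
  -- identify the coefficients from the asymptotics
  have hBlim : Tendsto (fun x : ℝ => B * (Complex.exp (-(Complex.I * E * x / hb)))^2) atTop
      (𝓝 ((2:ℂ)^s * (hb:ℂ)^e₁ - A)) := by
    have hcu : Tendsto (fun x => (starRingEnd ℂ)
        (f x * Complex.exp (-(Complex.I * E * x / hb)))) atTop (𝓝 1) := by
      have := (Complex.continuous_conj.tendsto 1).comp hf_lim
      rwa [map_one] at this
    have hmain : Tendsto (fun x : ℝ => B * (Complex.exp (-(Complex.I * E * x / hb)))^2 *
        (starRingEnd ℂ) (f x * Complex.exp (-(Complex.I * E * x / hb)))) atTop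
        (𝓝 ((2:ℂ)^s * (hb:ℂ)^e₁ - A)) := by
      have h4 := hG.sub (hf_lim.const_mul A)
      rw [mul_one] at h4
      apply h4.congr'
      filter_upwards [eventually_gt_atTop x₀] with x hx
      rw [hFAB x hx]
      simp only [hfc, map_mul]
      linear_combination (-(B * (starRingEnd ℂ) (f x) *
        Complex.exp (-(Complex.I * E * x / hb)))) * hEcc x
    have h5 := hmain.div hcu one_ne_zero
    rw [div_one] at h5
    apply h5.congr'
    filter_upwards [hcu.eventually_ne one_ne_zero] with x hx
    exact mul_div_cancel_right₀ _ hx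
  have hper_pos : 0 < Real.pi * hb / E := by positivity
  have hexp_eval1 : ∀ n : ℕ, (Complex.exp (-(Complex.I * E *
      ((((n : ℝ) * (Real.pi * hb / E)) : ℝ) : ℂ) / hb)))^2 = 1 := by
    intro n
    rw [sq, ← Complex.exp_add]
    have harg : -(Complex.I * (E:ℂ) * ((((n : ℝ) * (Real.pi * hb / E)) : ℝ) : ℂ) / hb) +
        -(Complex.I * (E:ℂ) * ((((n : ℝ) * (Real.pi * hb / E)) : ℝ) : ℂ) / hb)
        = ((-(n:ℤ) : ℤ) : ℂ) * (2 * Real.pi * Complex.I) := by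
      have hbc : (hb:ℂ) ≠ 0 := Complex.ofReal_ne_zero.mpr hbne
      have hec : (E:ℂ) ≠ 0 := Complex.ofReal_ne_zero.mpr hEne
      push_cast
      field_simp
      ring
    rw [harg]
    exact Complex.exp_int_mul_two_pi_mul_I _
  have hexp_eval2 : ∀ n : ℕ, (Complex.exp (-(Complex.I * E *
      (((((n : ℝ) + 2⁻¹) * (Real.pi * hb / E)) : ℝ) : ℂ) / hb)))^2 = -1 := by
    intro n
    rw [sq, ← Complex.exp_add]
    have harg : -(Complex.I * (E:ℂ) * (((((n : ℝ) + 2⁻¹) * (Real.pi * hb / E)) : ℝ) : ℂ) / hb) +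
        -(Complex.I * (E:ℂ) * (((((n : ℝ) + 2⁻¹) * (Real.pi * hb / E)) : ℝ) : ℂ) / hb)
        = ((-(n:ℤ) : ℤ) : ℂ) * (2 * Real.pi * Complex.I) + -(Real.pi * Complex.I) := by
      have hbc : (hb:ℂ) ≠ 0 := Complex.ofReal_ne_zero.mpr hbne
      have hec : (E:ℂ) ≠ 0 := Complex.ofReal_ne_zero.mpr hEne
      push_cast
      field_simp
      ring
    rw [harg, Complex.exp_add, Complex.exp_int_mul_two_pi_mul_I, one_mul,
      Complex.exp_neg, Complex.exp_pi_mul_I]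
    norm_num
  have hB1 : B = (2:ℂ)^s * (hb:ℂ)^e₁ - A := by
    have hseq1 : Tendsto (fun n : ℕ => (n : ℝ) * (Real.pi * hb / E)) atTop atTop :=
      tendsto_natCast_atTop_atTop.atTop_mul_const hper_pos
    have hcomp := hBlim.comp hseq1
    have hconst : Tendsto (fun _ : ℕ => B) atTop (𝓝 ((2:ℂ)^s * (hb:ℂ)^e₁ - A)) := by
      apply hcomp.congr
      intro n
      simp only [Function.comp_apply]
      rw [hexp_eval1 n, mul_one]
    exact tendsto_nhds_unique tendsto_const_nhds hconst
  have hB2 : -B = (2:ℂ)^s * (hb:ℂ)^e₁ - A := by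
    have hs0 : Tendsto (fun n : ℕ => (n : ℝ) + 2⁻¹) atTop atTop :=
      tendsto_atTop_add_const_right atTop 2⁻¹ tendsto_natCast_atTop_atTop
    have hseq2 : Tendsto (fun n : ℕ => ((n : ℝ) + 2⁻¹) * (Real.pi * hb / E)) atTop atTop :=
      hs0.atTop_mul_const hper_pos
    have hcomp := hBlim.comp hseq2
    have hconst : Tendsto (fun _ : ℕ => -B) atTop (𝓝 ((2:ℂ)^s * (hb:ℂ)^e₁ - A)) := by
      apply hcomp.congr
      intro n
      simp only [Function.comp_apply]
      rw [hexp_eval2 n]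
      ring
    exact tendsto_nhds_unique tendsto_const_nhds hconst
  have hB0 : B = 0 := by
    have h6 : B = -B := hB1.trans hB2.symm
    linear_combination h6 / 2
  have hA1 : A = (2:ℂ)^s * (hb:ℂ)^e₁ := by linear_combination hB1 - hB0
  -- conclusion
  intro x hx
  have hFx : F x = (2:ℂ)^s * (hb:ℂ)^e₁ * f x := by
    rw [hFAB x hx, hA1, hB0]
    ring
  have hzz : (2/α*Real.exp (-x/2)) = z x := by rw [hz]
  rw [hzz]
  have h2c : (2:ℂ)^e₁ * (2:ℂ)^s = 1 := by
    rw [show e₁ = -s from by rw [he₁, hs]; ring, Complex.cpow_neg]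
    exact inv_mul_cancel₀ h2s_ne
  have hbc : (hb:ℂ)^s * (hb:ℂ)^e₁ = 1 := by
    rw [show s = -e₁ from by rw [he₁, hs]; ring, Complex.cpow_neg]
    exact inv_mul_cancel₀ hbe_ne
  have hstep : (2:ℂ)^e₁ * (hb:ℂ)^s *
      (((Real.exp (x/4) * (Real.sqrt (deriv φ (z x)))⁻¹ : ℝ)) : ℂ) * gm (φ (z x))
      = (2:ℂ)^e₁ * (hb:ℂ)^s * F x := by
    simp only [hF]
    ring
  rw [hstep, hFx]
  linear_combination (-(f x) * ((hb:ℂ)^s * (hb:ℂ)^e₁)) * h2c + (-(f x)) * hbc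
end
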